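/- arXiv:2110.12132 — 2 statements merged into one kernel-verified Lean document; each statement's English description precedes it below -/
import Mathlib

section
/- (Kiefer–Wolfowitz equivalence theorem) Let π* be a design with M(π*) invertible. Then π* is D-optimal (maximizes det M(π) over all designs) if and only if π* is G-optimal (minimizes g(π) = max_{1≤i≤k} φ_iᵀ M(π)⁻¹ φ_i over all designs with invertible information matrix). -/
open Matrix BigOperators

/-- A design is a probability vector over the `k` candidate points. -/
def IsDesign {k : ℕ} (π : Fin k → ℝ) : Prop :=
  (∀ i, 0 ≤ π i) ∧ ∑ i, π i = 1

/-- The information matrix `M(π) = ∑ i, π i • φ i φ iᵀ` of a design. -/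
noncomputable def infoMatrix {d k : ℕ} (φ : Fin k → (Fin d → ℝ)) (π : Fin k → ℝ) :
    Matrix (Fin d) (Fin d) ℝ :=
  ∑ i, π i • vecMulVec (φ i) (φ i)

section KWAux
variable {d k : ℕ}

lemma vecMulVec_mulVec' (u v x : Fin d → ℝ) : vecMulVec u v *ᵥ x = (v ⬝ᵥ x) • u := by
  ext i
  simp only [mulVec, vecMulVec_apply, dotProduct, Pi.smul_apply, smul_eq_mul, Finset.sum_mul]
  exact Finset.sum_congr rfl fun j _ => by ring

lemma sum_mulVec' {ι : Type*} (s : Finset ι) (A : ι → Matrix (Fin d) (Fin d) ℝ) (x : Fin d → ℝ) :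
    (∑ l ∈ s, A l) *ᵥ x = ∑ l ∈ s, A l *ᵥ x := by
  ext i
  simp only [mulVec, dotProduct, Finset.sum_apply, Matrix.sum_apply, Finset.sum_mul]
  exact Finset.sum_comm

lemma infoMatrix_apply (φ : Fin k → Fin d → ℝ) (π : Fin k → ℝ) (i j : Fin d) :
    infoMatrix φ π i j = ∑ l, π l * (φ l i * φ l j) := by
  simp [infoMatrix, Matrix.sum_apply, vecMulVec_apply]

lemma infoMatrix_isHermitian (φ : Fin k → Fin d → ℝ) (π : Fin k → ℝ) :
    (infoMatrix φ π).IsHermitian := by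
  ext i j
  simp only [conjTranspose_apply, infoMatrix_apply, star_trivial]
  exact Finset.sum_congr rfl fun l _ => by ring

lemma dot_infoMatrix (φ : Fin k → Fin d → ℝ) (π : Fin k → ℝ) (x : Fin d → ℝ) :
    x ⬝ᵥ (infoMatrix φ π) *ᵥ x = ∑ l, π l * (φ l ⬝ᵥ x)^2 := by
  rw [infoMatrix, sum_mulVec']
  have : x ⬝ᵥ ∑ l : Fin k, (π l • vecMulVec (φ l) (φ l)) *ᵥ x
      = ∑ l : Fin k, x ⬝ᵥ ((π l • vecMulVec (φ l) (φ l)) *ᵥ x) := by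
    simp only [dotProduct, Finset.sum_apply, Finset.mul_sum]
    exact Finset.sum_comm
  rw [this]
  refine Finset.sum_congr rfl fun l _ => ?_
  rw [Matrix.smul_mulVec, vecMulVec_mulVec']
  simp only [dotProduct_smul, smul_eq_mul]
  rw [dotProduct_comm]
  ring

lemma trace_mul_infoMatrix (A : Matrix (Fin d) (Fin d) ℝ) (φ : Fin k → Fin d → ℝ)
    (π : Fin k → ℝ) :
    (A * infoMatrix φ π).trace = ∑ l, π l * (φ l ⬝ᵥ A *ᵥ φ l) := by
  rw [infoMatrix, Matrix.mul_sum, trace_sum]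
  refine Finset.sum_congr rfl fun l _ => ?_
  rw [Matrix.mul_smul, trace_smul]
  simp only [smul_eq_mul]
  congr 1
  simp only [trace, diag, Matrix.mul_apply, vecMulVec_apply, dotProduct, mulVec, Finset.mul_sum]
  exact Finset.sum_congr rfl fun i _ => Finset.sum_congr rfl fun j _ => by ring

lemma infoMatrix_posSemidef (φ : Fin k → Fin d → ℝ) {π : Fin k → ℝ} (hπ : ∀ i, 0 ≤ π i) :
    (infoMatrix φ π).PosSemidef := by
  refine PosSemidef.of_dotProduct_mulVec_nonneg (infoMatrix_isHermitian φ π) fun x => ?_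
  rw [star_trivial, dot_infoMatrix]
  exact Finset.sum_nonneg fun l _ => mul_nonneg (hπ l) (sq_nonneg _)


lemma mul_vecMulVec (A : Matrix (Fin d) (Fin d) ℝ) (x v : Fin d → ℝ) :
    A * vecMulVec x v = vecMulVec (A *ᵥ x) v := by
  ext i j
  simp only [Matrix.mul_apply, vecMulVec_apply, mulVec, dotProduct, Finset.sum_mul]
  exact Finset.sum_congr rfl fun l _ => by ring

lemma smul_vecMulVec (c : ℝ) (x v : Fin d → ℝ) :
    vecMulVec (c • x) v = c • vecMulVec x v := by
  ext i j
  simp [vecMulVec_apply]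
  ring

lemma det_one_add_vecMulVec (w v : Fin d → ℝ) :
    (1 + vecMulVec w v).det = 1 + v ⬝ᵥ w := by
  rw [vecMulVec_eq (Fin 1), Matrix.det_one_add_mul_comm]
  simp [Matrix.mul_apply, dotProduct]

lemma det_convex_comb {M : Matrix (Fin d) (Fin d) ℝ} (hM : IsUnit M.det) (u : Fin d → ℝ)
    {t : ℝ} (ht1 : t < 1) :
    ((1-t) • M + t • vecMulVec u u).det
      = (1-t)^d * M.det * (1 + t * (1-t)⁻¹ * (u ⬝ᵥ M⁻¹ *ᵥ u)) := by
  have h1t : (0:ℝ) < 1 - t := by linarith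
  set c : ℝ := t * (1-t)⁻¹ with hc
  have factor : (1-t) • M + t • vecMulVec u u
      = ((1-t) • M) * (1 + vecMulVec (c • (M⁻¹ *ᵥ u)) u) := by
    rw [Matrix.mul_add, Matrix.mul_one]
    congr 1
    rw [Matrix.smul_mul, mul_vecMulVec, Matrix.mulVec_smul, Matrix.mulVec_mulVec,
      Matrix.mul_nonsing_inv M hM, Matrix.one_mulVec, smul_vecMulVec, smul_smul, hc]
    congr 1
    field_simp
  rw [factor, det_mul, det_smul, Fintype.card_fin, det_one_add_vecMulVec]
  rw [dotProduct_smul]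
  simp only [smul_eq_mul]
  try ring

lemma bernoulli_bound {q : ℝ} {d : ℕ} (hd : 1 ≤ d) (hq : 0 ≤ q)
    (h : ∀ t : ℝ, 0 < t → t < 1 → (1-t)^(d-1) * ((1-t) + t*q) ≤ 1) : q ≤ d := by
  by_contra hlt
  push_neg at hlt
  have hd1 : (1:ℝ) ≤ d := by exact_mod_cast hd
  have hq1 : 1 < q := lt_of_le_of_lt hd1 hlt
  have hC0 : 0 ≤ ((d:ℝ) - 1) * (q - 1) := mul_nonneg (by linarith) (by linarith)
  have key : ∀ t : ℝ, 0 < t → t < 1 → q - (d:ℝ) ≤ (((d:ℝ) - 1) * (q - 1)) * t := by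
    intro t ht0 ht1
    have hb : 1 - ((d:ℝ) - 1) * t ≤ (1-t)^(d-1) := by
      have := one_add_mul_le_pow (a := -t) (by linarith) (d-1)
      have hcast : ((d-1 : ℕ) : ℝ) = (d:ℝ) - 1 := by
        rw [Nat.cast_sub hd]; norm_num
      rw [hcast] at this
      calc 1 - ((d:ℝ)-1)*t = 1 + ((d:ℝ)-1) * (-t) := by ring
        _ ≤ (1 + -t)^(d-1) := this
        _ = (1-t)^(d-1) := by ring_nf
    have hpos : 0 ≤ (1-t) + t*q := by nlinarith
    have h2 : (1 - ((d:ℝ) - 1) * t) * ((1-t) + t*q) ≤ 1 :=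
      le_trans (mul_le_mul_of_nonneg_right hb hpos) (h t ht0 ht1)
    have h3 : (q - (d:ℝ)) * t ≤ ((((d:ℝ) - 1) * (q - 1)) * t) * t := by nlinarith [h2]
    exact (mul_le_mul_iff_left₀ ht0).mp h3
  rcases le_or_gt (((d:ℝ) - 1) * (q - 1)) 0 with hC' | hC'
  · have := key (1/2) (by norm_num) (by norm_num)
    nlinarith
  · set t := min (1/2) ((q - d) / (2*(((d:ℝ) - 1) * (q - 1)))) with ht
    have hqd : 0 < q - d := by linarith
    have ht0 : 0 < t := lt_min (by norm_num) (by positivity)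
    have ht1 : t < 1 := lt_of_le_of_lt (min_le_left _ _) (by norm_num)
    have hk := key t ht0 ht1
    have hCt : (((d:ℝ) - 1) * (q - 1)) * t ≤ (q-d)/2 := by
      calc (((d:ℝ) - 1) * (q - 1)) * t
          ≤ (((d:ℝ) - 1) * (q - 1)) * ((q - d) / (2*(((d:ℝ) - 1) * (q - 1)))) :=
            mul_le_mul_of_nonneg_left (min_le_right _ _) hC0
        _ = (q-d)/2 := by field_simp [hC'.ne']; exact div_self hC'.ne'
    nlinarith


lemma uniform_posDef (hk : 0 < k) (φ : Fin k → Fin d → ℝ)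
    (hspan : Submodule.span ℝ (Set.range φ) = ⊤) :
    (infoMatrix φ (fun _ => (k:ℝ)⁻¹)).PosDef := by
  have hk0 : (0:ℝ) < k := by exact_mod_cast hk
  refine PosDef.of_dotProduct_mulVec_pos (infoMatrix_isHermitian φ _) fun x hx => ?_
  rw [star_trivial, dot_infoMatrix]
  have hex : ∃ l, φ l ⬝ᵥ x ≠ 0 := by
    by_contra hall
    push_neg at hall
    apply hx
    have hmem : x ∈ Submodule.span ℝ (Set.range φ) := by rw [hspan]; trivial
    have hall' : ∀ v ∈ Submodule.span ℝ (Set.range φ), v ⬝ᵥ x = 0 := by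
      intro v hv
      induction hv using Submodule.span_induction with
      | mem w hw => obtain ⟨l, rfl⟩ := hw; exact hall l
      | zero => simp
      | add v w _ _ hv hw => rw [add_dotProduct, hv, hw, add_zero]
      | smul c v _ hv => rw [smul_dotProduct, hv, smul_zero]
    exact dotProduct_self_eq_zero.mp (hall' x hmem)
  obtain ⟨l0, hl0⟩ := hex
  refine Finset.sum_pos' (fun l _ => by positivity) ⟨l0, Finset.mem_univ l0, ?_⟩
  have : 0 < (φ l0 ⬝ᵥ x)^2 := by positivity
  positivity

end KWAux

section KWMat
variable {n : Type*} [Fintype n] [DecidableEq n]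
open scoped MatrixOrder

lemma posDef_of_posSemidef_isUnit {M : Matrix n n ℝ} (h : M.PosSemidef) (hu : IsUnit M) :
    M.PosDef := by
  refine PosDef.of_dotProduct_mulVec_pos h.1 fun x hx => ?_
  rcases (h.dotProduct_mulVec_nonneg x).lt_or_eq with hlt | heq
  · exact hlt
  · exfalso
    apply hx
    have hMx : M *ᵥ x = 0 := (h.dotProduct_mulVec_zero_iff x).mp heq.symm
    have hdet : IsUnit M.det := (Matrix.isUnit_iff_isUnit_det M).mp hu
    calc x = (M⁻¹ * M) *ᵥ x := by rw [Matrix.nonsing_inv_mul M hdet, Matrix.one_mulVec]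
    _ = M⁻¹ *ᵥ (M *ᵥ x) := by rw [← Matrix.mulVec_mulVec]
    _ = 0 := by rw [hMx, Matrix.mulVec_zero]

lemma trace_eq_sum_eigenvalues {M : Matrix n n ℝ} (h : M.IsHermitian) :
    M.trace = ∑ i, h.eigenvalues i := by
  nth_rewrite 1 [h.spectral_theorem]
  rw [Unitary.conjStarAlgAut_apply]
  rw [Matrix.trace_mul_comm, ← Matrix.mul_assoc]
  rw [Unitary.coe_star_mul_self]
  simp [Matrix.trace_diagonal]

lemma det_le_one_of_trace_le {A : Matrix n n ℝ} (hA : A.PosSemidef)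
    (hn : 0 < Fintype.card n) (h : A.trace ≤ Fintype.card n) : A.det ≤ 1 := by
  set N := Fintype.card n with hN
  have hev : ∀ i, 0 ≤ hA.1.eigenvalues i := hA.eigenvalues_nonneg
  have hdet : A.det = ∏ i, hA.1.eigenvalues i := by
    rw [hA.1.det_eq_prod_eigenvalues]; norm_num
  have htr : ∑ i, hA.1.eigenvalues i ≤ N := by
    rw [← trace_eq_sum_eigenvalues]; exact h
  have amgm := Real.geom_mean_le_arith_mean_weighted Finset.univ (fun _ => (N:ℝ)⁻¹)
    hA.1.eigenvalues (fun i _ => by positivity) (by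
      simp [Finset.card_univ]
      field_simp
      rw [hN]) (fun i _ => hev i)
  have h1 : ∑ i, (N:ℝ)⁻¹ * hA.1.eigenvalues i ≤ 1 := by
    rw [← Finset.mul_sum]
    rw [inv_mul_le_iff₀ (by positivity : (0:ℝ) < N)]
    simpa using htr
  have h2 : (∏ i, hA.1.eigenvalues i ^ ((N:ℝ)⁻¹)) ^ (N:ℕ) ≤ 1 := by
    apply pow_le_one₀ (Finset.prod_nonneg fun i _ => Real.rpow_nonneg (hev i) _)
    exact le_trans amgm h1
  rw [hdet]
  calc ∏ i, hA.1.eigenvalues i = (∏ i, hA.1.eigenvalues i ^ ((N:ℝ)⁻¹)) ^ (N:ℕ) := by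
        rw [← Finset.prod_pow]
        refine Finset.prod_congr rfl fun i _ => ?_
        rw [← Real.rpow_natCast (hA.1.eigenvalues i ^ ((N:ℝ)⁻¹)), ← Real.rpow_mul (hev i)]
        rw [inv_mul_cancel₀ (by positivity : (N:ℝ) ≠ 0), Real.rpow_one]
    _ ≤ 1 := h2

lemma det_le_det_of_trace_le {A B : Matrix n n ℝ} (hA : A.PosDef) (hB : B.PosSemidef)
    (hn : 0 < Fintype.card n) (htr : (A⁻¹ * B).trace ≤ Fintype.card n) : B.det ≤ A.det := by
  have hAinv : A⁻¹.PosDef := hA.inv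
  set S := CFC.sqrt A⁻¹ with hS
  have hSherm : S.IsHermitian := (CFC.sqrt_nonneg A⁻¹).posSemidef.1
  have hSS : S * S = A⁻¹ := CFC.sqrt_mul_sqrt_self A⁻¹ hAinv.posSemidef.nonneg
  have hC : (S * B * S).PosSemidef := by
    have := hB.mul_mul_conjTranspose_same S
    rwa [hSherm.eq] at this
  have htrC : (S * B * S).trace ≤ Fintype.card n := by
    rw [Matrix.trace_mul_comm, ← Matrix.mul_assoc, hSS]
    exact htr
  have hdetC := det_le_one_of_trace_le hC hn htrC
  have hdetS : (S * B * S).det = A⁻¹.det * B.det := by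
    rw [det_mul, det_mul, ← hSS, det_mul]
    ring
  rw [hdetS] at hdetC
  have hdetA : 0 < A.det := hA.det_pos
  have : A⁻¹.det = A.det⁻¹ := by rw [Matrix.det_nonsing_inv]; simp [Ring.inverse_eq_inv']
  rw [this] at hdetC
  calc B.det = A.det * (A.det⁻¹ * B.det) := by field_simp
    _ ≤ A.det * 1 := by
        exact mul_le_mul_of_nonneg_left hdetC hdetA.le
    _ = A.det := mul_one _

end KWMat

theorem kiefer_wolfowitz_equivalence {d k : ℕ} (hd : 0 < d) (hk : 0 < k)
    (φ : Fin k → (Fin d → ℝ))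
    (hspan : Submodule.span ℝ (Set.range φ) = ⊤)
    (πs : Fin k → ℝ) (hπs : IsDesign πs) (hinv : IsUnit (infoMatrix φ πs)) :
    (∀ π, IsDesign π → (infoMatrix φ π).det ≤ (infoMatrix φ πs).det) ↔
      (∀ π, IsDesign π → IsUnit (infoMatrix φ π) →
        (⨆ i, φ i ⬝ᵥ (infoMatrix φ πs)⁻¹ *ᵥ φ i) ≤
          ⨆ i, φ i ⬝ᵥ (infoMatrix φ π)⁻¹ *ᵥ φ i) := by
  have hne : Nonempty (Fin k) := ⟨⟨0, hk⟩⟩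
  have hbdd : ∀ (f : Fin k → ℝ), BddAbove (Set.range f) := fun f => (Set.finite_range f).bddAbove
  have hMsdet : IsUnit (infoMatrix φ πs).det := (Matrix.isUnit_iff_isUnit_det _).mp hinv
  have hMsPD : (infoMatrix φ πs).PosDef :=
    posDef_of_posSemidef_isUnit (infoMatrix_posSemidef φ hπs.1) hinv
  -- trace identity
  have htr : ∀ π : Fin k → ℝ, IsDesign π → IsUnit (infoMatrix φ π) →
      ∑ l, π l * (φ l ⬝ᵥ (infoMatrix φ π)⁻¹ *ᵥ φ l) = (d:ℝ) := by
    intro π hπ hu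
    rw [← trace_mul_infoMatrix, Matrix.nonsing_inv_mul _ ((Matrix.isUnit_iff_isUnit_det _).mp hu),
      Matrix.trace_one]
    simp
  -- the sup is at least d for any invertible design
  have hge : ∀ π, IsDesign π → IsUnit (infoMatrix φ π) →
      (d:ℝ) ≤ ⨆ i, φ i ⬝ᵥ (infoMatrix φ π)⁻¹ *ᵥ φ i := by
    intro π hπ hu
    rw [← htr π hπ hu]
    calc ∑ l, π l * (φ l ⬝ᵥ (infoMatrix φ π)⁻¹ *ᵥ φ l)
        ≤ ∑ l, π l * (⨆ i, φ i ⬝ᵥ (infoMatrix φ π)⁻¹ *ᵥ φ i) :=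
          Finset.sum_le_sum fun l _ =>
            mul_le_mul_of_nonneg_left
              (le_ciSup (f := fun i => φ i ⬝ᵥ (infoMatrix φ π)⁻¹ *ᵥ φ i) (hbdd _) l) (hπ.1 l)
      _ = ⨆ i, φ i ⬝ᵥ (infoMatrix φ π)⁻¹ *ᵥ φ i := by
          rw [← Finset.sum_mul, hπ.2, one_mul]
  -- D-optimality gives the pointwise bound q_j ≤ d
  have hkey : ∀ π0 : Fin k → ℝ, IsDesign π0 → IsUnit (infoMatrix φ π0) →
      (∀ π, IsDesign π → (infoMatrix φ π).det ≤ (infoMatrix φ π0).det) →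
      ∀ j, φ j ⬝ᵥ (infoMatrix φ π0)⁻¹ *ᵥ φ j ≤ (d:ℝ) := by
    intro π0 hπ0 hu0 hopt j
    have hdet0 : IsUnit (infoMatrix φ π0).det := (Matrix.isUnit_iff_isUnit_det _).mp hu0
    have hPD0 : (infoMatrix φ π0).PosDef :=
      posDef_of_posSemidef_isUnit (infoMatrix_posSemidef φ hπ0.1) hu0
    set q : ℝ := φ j ⬝ᵥ (infoMatrix φ π0)⁻¹ *ᵥ φ j with hq
    have hq0 : 0 ≤ q := by
      have := hPD0.inv.posSemidef.dotProduct_mulVec_nonneg (φ j)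
      rwa [star_trivial] at this
    refine bernoulli_bound hd hq0 ?_
    intro t ht0 ht1
    have h1t : (0:ℝ) < 1 - t := by linarith
    set πt : Fin k → ℝ := fun i => (1-t) * π0 i + t * (Pi.single j (1:ℝ) : Fin k → ℝ) i with hπt
    have hsingle_nonneg : ∀ i, (0:ℝ) ≤ (Pi.single j (1:ℝ) : Fin k → ℝ) i := by
      intro i
      rcases eq_or_ne i j with rfl | hne
      · simp
      · simp [Pi.single_eq_of_ne hne]
    have hsingle_sum : ∑ i, (Pi.single j (1:ℝ) : Fin k → ℝ) i = 1 := by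
      rw [Finset.sum_eq_single j]
      · simp
      · intro b _ hb; simp [Pi.single_eq_of_ne hb]
      · simp
    have hdes : IsDesign πt := by
      constructor
      · intro i
        have := hπ0.1 i
        have := hsingle_nonneg i
        have ht0' := ht0.le
        positivity
      · simp only [hπt, Finset.sum_add_distrib, ← Finset.mul_sum, hπ0.2, hsingle_sum]
        ring
    have hMt : infoMatrix φ πt = (1-t) • infoMatrix φ π0 + t • vecMulVec (φ j) (φ j) := by
      unfold infoMatrix
      simp only [hπt, add_smul, Finset.sum_add_distrib]
      congr 1
      · rw [Finset.smul_sum]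
        exact Finset.sum_congr rfl fun i _ => by rw [smul_smul]
      · rw [Finset.sum_eq_single j]
        · simp
        · intro b _ hb; simp [Pi.single_eq_of_ne hb]
        · simp
    have hle := hopt πt hdes
    rw [hMt, det_convex_comb hdet0 _ ht1, ← hq] at hle
    have hDpos : 0 < (infoMatrix φ π0).det := hPD0.det_pos
    have h4 : ((1-t)^d * (1 + t * (1-t)⁻¹ * q)) * (infoMatrix φ π0).det
        ≤ 1 * (infoMatrix φ π0).det := by
      rw [one_mul]
      calc ((1-t)^d * (1 + t * (1-t)⁻¹ * q)) * (infoMatrix φ π0).det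
          = (1-t)^d * (infoMatrix φ π0).det * (1 + t * (1-t)⁻¹ * q) := by ring
        _ ≤ (infoMatrix φ π0).det := hle
    have h5 : (1-t)^d * (1 + t * (1-t)⁻¹ * q) ≤ 1 := le_of_mul_le_mul_right h4 hDpos
    have hpowd : (1-t)^d = (1-t)^(d-1) * (1-t) := by
      conv_lhs => rw [show d = (d-1)+1 from (Nat.succ_pred_eq_of_pos hd).symm]
      rw [pow_succ]
    calc (1-t)^(d-1) * ((1-t) + t*q)
        = (1-t)^d * (1 + t * (1-t)⁻¹ * q) := by
          rw [hpowd]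
          field_simp
      _ ≤ 1 := h5
  constructor
  · intro hopt π hπ hu
    exact ciSup_le fun j => le_trans (hkey πs hπs hinv hopt j) (hge π hπ hu)
  · intro hg π hπ
    -- existence of a D-optimal design with invertible information matrix
    have huni : IsDesign (fun _ : Fin k => (k:ℝ)⁻¹) := by
      constructor
      · intro i; positivity
      · have hk0 : (k:ℝ) ≠ 0 := by positivity
        simp [Finset.sum_const]
        field_simp
    have huPD := uniform_posDef hk φ hspan
    have hcont : Continuous fun π : Fin k → ℝ => (infoMatrix φ π).det := by
      apply Continuous.matrix_det
      unfold infoMatrix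
      exact continuous_finset_sum _ fun i _ => (continuous_apply i).smul continuous_const
    obtain ⟨π0, hπ0mem, hmax⟩ :=
      (isCompact_stdSimplex ℝ (Fin k)).exists_isMaxOn ⟨fun _ => (k:ℝ)⁻¹, huni⟩
        hcont.continuousOn
    have hπ0 : IsDesign π0 := hπ0mem
    have hdet0pos : 0 < (infoMatrix φ π0).det :=
      lt_of_lt_of_le huPD.det_pos (hmax huni)
    have hu0 : IsUnit (infoMatrix φ π0) :=
      (Matrix.isUnit_iff_isUnit_det _).mpr hdet0pos.ne'.isUnit
    have hopt0 : ∀ π', IsDesign π' → (infoMatrix φ π').det ≤ (infoMatrix φ π0).det :=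
      fun π' hπ' => hmax hπ'
    have hsup0 : (⨆ i, φ i ⬝ᵥ (infoMatrix φ π0)⁻¹ *ᵥ φ i) ≤ (d:ℝ) :=
      ciSup_le (hkey π0 hπ0 hu0 hopt0)
    have hqs : ∀ j, φ j ⬝ᵥ (infoMatrix φ πs)⁻¹ *ᵥ φ j ≤ (d:ℝ) :=
      fun j => le_trans
        (le_ciSup (f := fun i => φ i ⬝ᵥ (infoMatrix φ πs)⁻¹ *ᵥ φ i) (hbdd _) j)
        (le_trans (hg π0 hπ0 hu0) hsup0)
    -- conclude D-optimality via the determinant-trace inequality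
    have htrb : ((infoMatrix φ πs)⁻¹ * infoMatrix φ π).trace ≤ (Fintype.card (Fin d) : ℝ) := by
      rw [trace_mul_infoMatrix, Fintype.card_fin]
      calc ∑ l, π l * (φ l ⬝ᵥ (infoMatrix φ πs)⁻¹ *ᵥ φ l)
          ≤ ∑ l, π l * (d:ℝ) :=
            Finset.sum_le_sum fun l _ => mul_le_mul_of_nonneg_left (hqs l) (hπ.1 l)
        _ = (d:ℝ) := by rw [← Finset.sum_mul, hπ.2, one_mul]
    exact det_le_det_of_trace_le hMsPD (infoMatrix_posSemidef φ hπ.1)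
      (by simpa using hd) htrb
end

section
/- Directional derivative of the D-optimality objective: let π be a design with M(π) positive definite, let a ∈ {1,…,k}, let e_a be the design putting all mass on a, and define F(t) := log det M((1−t)·π + t·e_a) for t ∈ [0,1). Then F is differentiable at 0 from the right and F'(0) = φ_aᵀ M(π)⁻¹ φ_a − d. -/
open Matrix BigOperators

theorem logdet_directional_derivative {d k : ℕ} (hd : 0 < d) (hk : 0 < k)
    (φ : Fin k → (Fin d → ℝ))
    (hspan : Submodule.span ℝ (Set.range φ) = ⊤)
    (π : Fin k → ℝ) (hπ : IsDesign π) (hM : (infoMatrix φ π).PosDef)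
    (a : Fin k) :
    HasDerivWithinAt
      (fun t : ℝ =>
        Real.log (infoMatrix φ ((1 - t) • π + t • (Pi.single a 1 : Fin k → ℝ))).det)
      (φ a ⬝ᵥ (infoMatrix φ π)⁻¹ *ᵥ φ a - (d : ℝ)) (Set.Ici 0) 0 := by
  set M := infoMatrix φ π with hMdef
  set A := vecMulVec (φ a) (φ a) with hAdef
  have hdet : M.det ≠ 0 := hM.det_pos.ne'
  have hunit : IsUnit M.det := isUnit_iff_ne_zero.mpr hdet
  -- the information matrix along the path
  have key : ∀ t : ℝ, infoMatrix φ ((1 - t) • π + t • (Pi.single a 1 : Fin k → ℝ))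
      = M + t • (A - M) := by
    intro t
    have h1 : infoMatrix φ ((1 - t) • π + t • (Pi.single a 1 : Fin k → ℝ))
        = (1 - t) • M + t • infoMatrix φ (Pi.single a 1) := by
      rw [hMdef]
      unfold infoMatrix
      rw [Finset.smul_sum, Finset.smul_sum, ← Finset.sum_add_distrib]
      refine Finset.sum_congr rfl fun i _ => ?_
      simp [add_smul, smul_smul]
    have h2 : infoMatrix φ (Pi.single a 1) = A := by
      unfold infoMatrix
      rw [Finset.sum_eq_single a]
      · simp [hAdef]
      · intro b _ hb; simp [Pi.single_apply, hb]
      · intro h; exact absurd (Finset.mem_univ a) h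
    rw [h1, h2]
    rw [sub_smul, one_smul, smul_sub]
    abel
  set C := M⁻¹ * (A - M) with hCdef
  have hfact : ∀ t : ℝ, M + t • (A - M) = M * (1 + t • C) := by
    intro t
    rw [mul_add, mul_one, hCdef, Matrix.mul_smul, ← Matrix.mul_assoc,
      Matrix.mul_nonsing_inv M hunit, Matrix.one_mul]
  set P := (Matrix.det (1 + (Polynomial.X : Polynomial ℝ) • C.map Polynomial.C)).divX.divX
    with hPdef
  have hdetexp : ∀ t : ℝ, (1 + t • C).det = 1 + C.trace * t + P.eval t * t ^ 2 :=
    fun t => Matrix.det_one_add_smul t C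
  -- derivative of g t = M.det * (1 + trace C * t + P.eval t * t^2) at 0
  have hg : HasDerivAt (fun t : ℝ => M.det * (1 + C.trace * t + P.eval t * t ^ 2))
      (M.det * C.trace) 0 := by
    have h1 : HasDerivAt (fun t : ℝ => 1 + C.trace * t + P.eval t * t ^ 2) C.trace 0 := by
      have ha : HasDerivAt (fun t : ℝ => 1 + C.trace * t) C.trace 0 := by
        simpa using (hasDerivAt_id (0:ℝ)).const_mul C.trace |>.const_add 1
      have hb : HasDerivAt (fun t : ℝ => P.eval t * t ^ 2) 0 0 := by
        have := (P.hasDerivAt 0).mul (hasDerivAt_pow 2 (0:ℝ))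
        exact this.congr_deriv (by simp)
      exact (ha.add hb).congr_deriv (by simp)
    simpa using h1.const_mul M.det
  -- compose with log
  have hne : M.det * (1 + C.trace * 0 + P.eval 0 * 0 ^ 2) ≠ 0 := by
    simpa using hdet
  have hlog : HasDerivAt (fun t : ℝ =>
      Real.log (M.det * (1 + C.trace * t + P.eval t * t ^ 2)))
      (M.det * C.trace / (M.det * (1 + C.trace * 0 + P.eval 0 * 0 ^ 2))) 0 :=
    hg.log hne
  have hfun : (fun t : ℝ =>
      Real.log (infoMatrix φ ((1 - t) • π + t • (Pi.single a 1 : Fin k → ℝ))).det)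
      = fun t : ℝ => Real.log (M.det * (1 + C.trace * t + P.eval t * t ^ 2)) := by
    funext t
    rw [key t, hfact t, Matrix.det_mul, hdetexp t]
  -- value of the derivative
  have htrace : C.trace = φ a ⬝ᵥ M⁻¹ *ᵥ φ a - (d : ℝ) := by
    have h1 : C.trace = (M⁻¹ * A).trace - (M⁻¹ * M).trace := by
      rw [hCdef, mul_sub, Matrix.trace_sub]
    have h2 : M⁻¹ * M = 1 := Matrix.nonsing_inv_mul M hunit
    have h3 : (M⁻¹ * A).trace = φ a ⬝ᵥ M⁻¹ *ᵥ φ a := by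
      simp only [hAdef, Matrix.trace, Matrix.diag, Matrix.mul_apply, vecMulVec_apply,
        dotProduct, mulVec]
      refine Finset.sum_congr rfl fun i _ => ?_
      rw [Finset.mul_sum]
      refine Finset.sum_congr rfl fun j _ => ?_
      ring
    rw [h1, h2, h3, Matrix.trace_one]
    simp
  have hval : M.det * C.trace / (M.det * (1 + C.trace * 0 + P.eval 0 * 0 ^ 2))
      = φ a ⬝ᵥ M⁻¹ *ᵥ φ a - (d : ℝ) := by
    rw [← htrace]
    field_simp
    simp
  rw [hfun]
  rw [← hval]
  exact hlog.hasDerivWithinAt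
end
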